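/- For every s ∈ ℝ, the function g_s has a left derivative at s equal to s·g_s(s) + 1 − Φ(s) and a right derivative at s equal to s·g_s(s) − Φ(s); consequently the right-sided derivative g_s'(s+) equals the left-sided derivative g_s'(s−) minus 1, i.e. g_s'(s+) = −1 + g_s'(s−). -/
import Mathlib

open MeasureTheory

noncomputable def Phi (s : ℝ) : ℝ :=
  ((ProbabilityTheory.gaussianReal 0 1) (Set.Iic s)).toReal

noncomputable def steinG (s w : ℝ) : ℝ :=
  Real.exp (w ^ 2 / 2) *
    ∫ u in Set.Iic w, ((if u ≤ s then (1 : ℝ) else 0) - Phi s) * Real.exp (-u ^ 2 / 2)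

lemma phi_integrable : Integrable (fun u : ℝ => Real.exp (-u ^ 2 / 2)) := by
  have := integrable_exp_neg_mul_sq (b := 1/2) (by norm_num)
  convert this using 2 with u
  ring_nf

lemma steinh_integrable (s : ℝ) :
    Integrable (fun u : ℝ => ((if u ≤ s then (1 : ℝ) else 0) - Phi s) * Real.exp (-u ^ 2 / 2)) := by
  have h1 : Integrable ((Set.Iic s).indicator (fun u : ℝ => Real.exp (-u ^ 2 / 2))) :=
    phi_integrable.indicator measurableSet_Iic
  have h2 : Integrable (fun u : ℝ => Phi s * Real.exp (-u ^ 2 / 2)) :=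
    phi_integrable.const_mul _
  have := h1.sub h2
  convert this using 1
  funext u
  by_cases h : u ≤ s <;>
    simp [Set.indicator, Set.mem_Iic, h, sub_mul]

lemma exp_hasDerivAt (s : ℝ) :
    HasDerivAt (fun w : ℝ => Real.exp (w ^ 2 / 2)) (s * Real.exp (s ^ 2 / 2)) s := by
  have h1 : HasDerivAt (fun w : ℝ => w ^ 2 / 2) s s := by
    have := (hasDerivAt_pow 2 s).div_const 2
    simpa using this
  simpa [mul_comm] using h1.exp

lemma exp_mul_exp_neg (s c : ℝ) :
    Real.exp (s ^ 2 / 2) * (c * Real.exp (-s ^ 2 / 2)) = c := by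
  rw [mul_comm c, ← mul_assoc, ← Real.exp_add,
    show s ^ 2 / 2 + -s ^ 2 / 2 = 0 by ring, Real.exp_zero, one_mul]

theorem steinG_one_sided_derivs (s : ℝ) :
    HasDerivWithinAt (steinG s) (s * steinG s s + 1 - Phi s) (Set.Iic s) s ∧
    HasDerivWithinAt (steinG s) (s * steinG s s - Phi s) (Set.Ici s) s ∧
    s * steinG s s - Phi s = -1 + (s * steinG s s + 1 - Phi s) := by
  set φ : ℝ → ℝ := fun u => Real.exp (-u ^ 2 / 2) with hφ
  set h : ℝ → ℝ := fun u => ((if u ≤ s then (1 : ℝ) else 0) - Phi s) * φ u with hh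
  have hφc : Continuous φ := by fun_prop
  have hhi : Integrable h := steinh_integrable s
  set F : ℝ := ∫ u in Set.Iic s, h u with hF
  have hFe : steinG s s = Real.exp (s ^ 2 / 2) * F := rfl
  refine ⟨?_, ?_, by ring⟩
  · -- left derivative
    set h₁ : ℝ → ℝ := fun u => (1 - Phi s) * φ u with hh₁
    have hc : Continuous h₁ := continuous_const.mul hφc
    have hci : Integrable h₁ := phi_integrable.const_mul _
    have hint : HasDerivAt (fun w : ℝ => ∫ u in s..w, h₁ u) (h₁ s) s :=
      intervalIntegral.integral_hasDerivAt_right (hc.intervalIntegrable _ _)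
        (hc.stronglyMeasurableAtFilter _ _) hc.continuousAt
    have hG : HasDerivAt (fun w : ℝ => Real.exp (w ^ 2 / 2) * (F + ∫ u in s..w, h₁ u))
        (s * Real.exp (s ^ 2 / 2) * (F + ∫ u in s..s, h₁ u)
          + Real.exp (s ^ 2 / 2) * (0 + h₁ s)) s :=
      (exp_hasDerivAt s).mul ((hasDerivAt_const s F).add hint)
    have hval : s * Real.exp (s ^ 2 / 2) * (F + ∫ u in s..s, h₁ u)
          + Real.exp (s ^ 2 / 2) * (0 + h₁ s) = s * steinG s s + 1 - Phi s := by
      rw [intervalIntegral.integral_same, add_zero, zero_add, hFe]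
      have : Real.exp (s ^ 2 / 2) * h₁ s = 1 - Phi s := exp_mul_exp_neg s _
      rw [this]; ring
    rw [hval] at hG
    refine hG.hasDerivWithinAt.congr (fun w hw => ?_) ?_
    · -- steinG s w = exp * (F + ∫ s..w h₁) for w ≤ s
      have hw' : w ≤ s := hw
      have e1 : ∫ u in Set.Iic w, h u = ∫ u in Set.Iic w, h₁ u :=
        setIntegral_congr_fun measurableSet_Iic (fun u hu => by
          simp only [hh, hh₁, if_pos (le_trans (Set.mem_Iic.mp hu) hw')])
      have e2 : F = ∫ u in Set.Iic s, h₁ u :=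
        setIntegral_congr_fun measurableSet_Iic (fun u hu => by
          simp only [hh, hh₁, if_pos (Set.mem_Iic.mp hu)])
      have e3 : (∫ u in Set.Iic w, h₁ u) - ∫ u in Set.Iic s, h₁ u = ∫ u in s..w, h₁ u :=
        intervalIntegral.integral_Iic_sub_Iic hci.integrableOn hci.integrableOn
      have key : (∫ u in Set.Iic w, h u) = F + ∫ u in s..w, h₁ u := by
        rw [e1, e2]; linarith [e3]
      show Real.exp (w ^ 2 / 2) * (∫ u in Set.Iic w, h u)
          = Real.exp (w ^ 2 / 2) * (F + ∫ u in s..w, h₁ u)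
      rw [key]
    · simp [hFe, intervalIntegral.integral_same]
  · -- right derivative
    set h₂ : ℝ → ℝ := fun u => (0 - Phi s) * φ u with hh₂
    have hc : Continuous h₂ := continuous_const.mul hφc
    have hint : HasDerivAt (fun w : ℝ => ∫ u in s..w, h₂ u) (h₂ s) s :=
      intervalIntegral.integral_hasDerivAt_right (hc.intervalIntegrable _ _)
        (hc.stronglyMeasurableAtFilter _ _) hc.continuousAt
    have hG : HasDerivAt (fun w : ℝ => Real.exp (w ^ 2 / 2) * (F + ∫ u in s..w, h₂ u))
        (s * Real.exp (s ^ 2 / 2) * (F + ∫ u in s..s, h₂ u)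
          + Real.exp (s ^ 2 / 2) * (0 + h₂ s)) s :=
      (exp_hasDerivAt s).mul ((hasDerivAt_const s F).add hint)
    have hval : s * Real.exp (s ^ 2 / 2) * (F + ∫ u in s..s, h₂ u)
          + Real.exp (s ^ 2 / 2) * (0 + h₂ s) = s * steinG s s - Phi s := by
      rw [intervalIntegral.integral_same, add_zero, zero_add, hFe]
      have : Real.exp (s ^ 2 / 2) * h₂ s = 0 - Phi s := exp_mul_exp_neg s _
      rw [this]; ring
    rw [hval] at hG
    refine hG.hasDerivWithinAt.congr (fun w hw => ?_) ?_
    · have hw' : s ≤ w := hw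
      have e1 : (∫ u in Set.Iic w, h u) - F = ∫ u in s..w, h u :=
        intervalIntegral.integral_Iic_sub_Iic hhi.integrableOn hhi.integrableOn
      have e2 : (∫ u in s..w, h u) = ∫ u in s..w, h₂ u := by
        refine intervalIntegral.integral_congr_ae (Filter.Eventually.of_forall fun u hu => ?_)
        rw [Set.uIoc_of_le hw'] at hu
        simp only [hh, hh₂, if_neg (not_le.mpr hu.1)]
      have key : (∫ u in Set.Iic w, h u) = F + ∫ u in s..w, h₂ u := by
        rw [← e2]; linarith [e1]
      show Real.exp (w ^ 2 / 2) * (∫ u in Set.Iic w, h u)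
          = Real.exp (w ^ 2 / 2) * (F + ∫ u in s..w, h₂ u)
      rw [key]
    · simp [hFe, intervalIntegral.integral_same]
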